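/- The 2×2 matrix multiplication tensor admits the rank-7 decomposition M₂ = A⊗A⊗A + B⊗B⊗B + C⊗C⊗C + D⊗D⊗D + (X⊗Y⊗Z + Y⊗Z⊗X + Z⊗X⊗Y), where A = [[0,−1],[1,−1]], B = [[1,0],[0,0]], C = [[0,1],[0,1]], D = [[0,0],[−1,1]], X = [[0,1],[0,0]], Y = [[0,0],[1,0]], Z = [[1,−1],[1,−1]] (2×2 complex matrices given by their rows). -/

import Mathlib

open scoped TensorProduct
open Matrix

noncomputable section

abbrev M2 := Matrix (Fin 2) (Fin 2) ℂ
abbrev W2 := M2 ⊗[ℂ] (M2 ⊗[ℂ] M2)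

/-- matrix units -/
def E (i j : Fin 2) : M2 := single i j 1

/-- the 2×2 matrix multiplication tensor -/
def MatMul2 : W2 :=
  ∑ i : Fin 2, ∑ j : Fin 2, ∑ k : Fin 2, E i j ⊗ₜ[ℂ] (E j k ⊗ₜ[ℂ] E k i)

def A : M2 := !![0, -1; 1, -1]
def B : M2 := !![1, 0; 0, 0]
def C : M2 := !![0, 1; 0, 1]
def D : M2 := !![0, 0; -1, 1]
def X : M2 := !![0, 1; 0, 0]
def Y : M2 := !![0, 0; 1, 0]
def Z : M2 := !![1, -1; 1, -1]

/-- A rank-7 decomposition of the 2×2 matrix multiplication tensor in the Strassen family. -/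
theorem strassen_family_decomposition :
    MatMul2 =
      A ⊗ₜ[ℂ] (A ⊗ₜ[ℂ] A) + B ⊗ₜ[ℂ] (B ⊗ₜ[ℂ] B) + C ⊗ₜ[ℂ] (C ⊗ₜ[ℂ] C) + D ⊗ₜ[ℂ] (D ⊗ₜ[ℂ] D) +
        (X ⊗ₜ[ℂ] (Y ⊗ₜ[ℂ] Z) + Y ⊗ₜ[ℂ] (Z ⊗ₜ[ℂ] X) + Z ⊗ₜ[ℂ] (X ⊗ₜ[ℂ] Y)) := by
  have hA : A = -E 0 1 + (E 1 0 + -E 1 1) := by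
    ext i j; fin_cases i <;> fin_cases j <;> simp [A, E, Matrix.single]
  have hB : B = E 0 0 := by
    ext i j; fin_cases i <;> fin_cases j <;> simp [B, E, Matrix.single]
  have hC : C = E 0 1 + E 1 1 := by
    ext i j; fin_cases i <;> fin_cases j <;> simp [C, E, Matrix.single]
  have hD : D = -E 1 0 + E 1 1 := by
    ext i j; fin_cases i <;> fin_cases j <;> simp [D, E, Matrix.single]
  have hX : X = E 0 1 := by
    ext i j; fin_cases i <;> fin_cases j <;> simp [X, E, Matrix.single]
  have hY : Y = E 1 0 := by
    ext i j; fin_cases i <;> fin_cases j <;> simp [Y, E, Matrix.single]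
  have hZ : Z = E 0 0 + (-E 0 1 + (E 1 0 + -E 1 1)) := by
    ext i j; fin_cases i <;> fin_cases j <;> simp [Z, E, Matrix.single]
  rw [MatMul2, hA, hB, hC, hD, hX, hY, hZ]
  simp only [Fin.sum_univ_two, TensorProduct.add_tmul, TensorProduct.tmul_add,
    TensorProduct.neg_tmul, TensorProduct.tmul_neg]
  abel
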